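/- Let E be a finite-dimensional subspace of a Banach space X and ε > 0. Then there exists a closed finite-codimensional subspace F of X such that ‖x‖ ≤ (1 + ε)‖x + v‖ for every x ∈ E and v ∈ F. -/

import Mathlib

theorem stmt_11 {X : Type*} [NormedAddCommGroup X] [NormedSpace ℝ X]
    [CompleteSpace X]
    (E : Subspace ℝ X) (hE : FiniteDimensional ℝ E) (ε : ℝ) (hε : 0 < ε) :
    ∃ F : Subspace ℝ X, IsClosed (F : Set X) ∧ FiniteDimensional ℝ (X ⧸ F) ∧
      ∀ x ∈ E, ∀ v ∈ F, ‖x‖ ≤ (1 + ε) * ‖x + v‖ := by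
  classical
  have hε1 : (0:ℝ) < 1 + ε := by linarith
  set δ : ℝ := ε / (2 * (1 + ε)) with hδdef
  have hδ0 : 0 < δ := by positivity
  have hδ1 : δ < 1 := by
    rw [hδdef, div_lt_one (by positivity)]; nlinarith
  set S : Set X := Subtype.val '' (Metric.sphere (0:E) 1) with hSdef
  have hScomp : IsCompact S := (isCompact_sphere (0:E) 1).image continuous_subtype_val
  obtain ⟨t, htfin, htcover⟩ := (Metric.totallyBounded_iff.mp hScomp.totallyBounded) δ hδ0
  set t' : Set X := {y ∈ t | y ≠ 0} with ht'def
  have ht'fin : t'.Finite := htfin.subset (fun y hy => hy.1)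
  have hnormS : ∀ x ∈ S, ‖x‖ = 1 := by
    rintro x ⟨z, hz, rfl⟩
    simpa using Metric.mem_sphere.mp hz
  have hcover' : ∀ x ∈ S, ∃ y ∈ t', ‖x - y‖ < δ := by
    intro x hx
    obtain ⟨y, hyt, hxy⟩ := Set.mem_iUnion₂.mp (htcover hx)
    rw [Metric.mem_ball, dist_eq_norm] at hxy
    have hy0 : y ≠ 0 := by
      rintro rfl
      rw [sub_zero, hnormS x hx] at hxy
      linarith
    exact ⟨y, ⟨hyt, hy0⟩, hxy⟩
  haveI : Fintype t' := ht'fin.fintype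
  have hf : ∀ y : t', ∃ g : X →L[ℝ] ℝ, ‖g‖ = 1 ∧ g y = ‖(y:X)‖ := fun y =>
    exists_dual_vector ℝ (y:X) (norm_ne_zero_iff.mpr y.2.2)
  choose f hf1 hf2 using hf
  set T : X →L[ℝ] (t' → ℝ) := ContinuousLinearMap.pi f with hT
  refine ⟨LinearMap.ker (T : X →ₗ[ℝ] (t' → ℝ)), ?_, ?_, ?_⟩
  · have : (LinearMap.ker (T : X →ₗ[ℝ] (t' → ℝ)) : Set X) = T ⁻¹' {0} := by
      ext x; simp [LinearMap.mem_ker]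
    rw [this]
    exact IsClosed.preimage T.continuous isClosed_singleton
  · have := (LinearMap.quotKerEquivRange (T : X →ₗ[ℝ] (t' → ℝ)))
    exact LinearEquiv.finiteDimensional this.symm
  · intro x hx v hv
    rcases eq_or_ne x 0 with rfl | hx0
    · simp; positivity
    -- normalize
    have hxn : 0 < ‖x‖ := norm_pos_iff.mpr hx0
    set u : X := ‖x‖⁻¹ • x with hu
    set w : X := ‖x‖⁻¹ • v with hw
    have huS : u ∈ S := by
      refine ⟨⟨u, E.smul_mem _ hx⟩, ?_, rfl⟩
      rw [Metric.mem_sphere]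
      simp only [dist_zero_right]
      rw [show ‖(⟨u, E.smul_mem _ hx⟩ : E)‖ = ‖u‖ from rfl, hu, norm_smul]
      simp [hxn.ne', abs_of_pos (inv_pos.mpr hxn), inv_mul_cancel₀ hxn.ne']
    obtain ⟨y, hyt', hyd⟩ := hcover' u huS
    have hwker : ∀ i : t', f i w = 0 := by
      intro i
      have hv' : T v = 0 := hv
      have : f i v = 0 := congrFun hv' i
      rw [hw, map_smul, this, smul_zero]
    -- key estimate
    have hynorm : (1:ℝ) - δ ≤ ‖y‖ := by
      have h1 : ‖u‖ = 1 := hnormS u huS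
      have := norm_sub_norm_le u y
      rw [h1] at this
      linarith [le_of_lt hyd]
    set i : t' := ⟨y, hyt'⟩ with hi
    have hkey : 1 - 2 * δ ≤ ‖u + w‖ := by
      have h1 : f i (u + w) = ‖y‖ + f i (u - y) := by
        have : (u + w) = y + (u - y) + w := by abel
        rw [this, map_add, map_add, hwker i, add_zero, hf2 i]
      have h2 : |f i (u - y)| ≤ δ := by
        calc |f i (u - y)| = ‖f i (u - y)‖ := rfl
          _ ≤ ‖f i‖ * ‖u - y‖ := (f i).le_opNorm _
          _ = ‖u - y‖ := by rw [hf1 i, one_mul]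
          _ ≤ δ := le_of_lt hyd
      have h3 : f i (u + w) ≤ ‖u + w‖ := by
        calc f i (u + w) ≤ |f i (u + w)| := le_abs_self _
          _ = ‖f i (u + w)‖ := rfl
          _ ≤ ‖f i‖ * ‖u + w‖ := (f i).le_opNorm _
          _ = ‖u + w‖ := by rw [hf1 i, one_mul]
      have := abs_le.mp h2
      rw [h1] at h3
      linarith
    have h2δ : (1 + ε) * (1 - 2 * δ) = 1 := by
      rw [hδdef]; field_simp; ring
    have huw : u + w = ‖x‖⁻¹ • (x + v) := by rw [hu, hw, smul_add]
    have hnuw : ‖u + w‖ = ‖x‖⁻¹ * ‖x + v‖ := by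
      rw [huw, norm_smul, norm_inv, norm_norm]
    have hfin : 1 ≤ (1 + ε) * ‖u + w‖ := by
      calc (1:ℝ) = (1 + ε) * (1 - 2 * δ) := h2δ.symm
        _ ≤ (1 + ε) * ‖u + w‖ := by
            apply mul_le_mul_of_nonneg_left hkey (le_of_lt hε1)
    rw [hnuw] at hfin
    calc ‖x‖ = ‖x‖ * 1 := (mul_one _).symm
      _ ≤ ‖x‖ * ((1 + ε) * (‖x‖⁻¹ * ‖x + v‖)) := by
          exact mul_le_mul_of_nonneg_left hfin (le_of_lt hxn)
      _ = (1 + ε) * ‖x + v‖ := by field_simp
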